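/- Let (X, Γ, Φ) be a minimal equicontinuous Cantor action. Then for every x ∈ X there exists an adapted neighborhood basis at x: a chain of clopen subsets { U_ℓ ⊂ X : ℓ ≥ 0 } with U₀ = X, each U_ℓ adapted to the action, x ∈ U_{ℓ+1} ⊊ U_ℓ a proper inclusion for all ℓ ≥ 0, and ⋂_{ℓ>0} U_ℓ = {x}. -/

import Mathlib

noncomputable section

open Set Topology

/-! ### The group of homeomorphisms -/

namespace Homeomorph

variable {X : Type*} [TopologicalSpace X]

instance instGroup' : Group (X ≃ₜ X) where
  mul f g := g.trans f
  one := Homeomorph.refl X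
  inv := Homeomorph.symm
  mul_assoc f g h := rfl
  one_mul f := rfl
  mul_one f := rfl
  inv_mul_cancel f := Homeomorph.ext fun x => f.symm_apply_apply x

@[simp] theorem mul_apply' (f g : X ≃ₜ X) (x : X) : (f * g) x = f (g x) := rfl
@[simp] theorem one_apply' (x : X) : (1 : X ≃ₜ X) x = x := rfl
@[simp] theorem inv_eq_symm (f : X ≃ₜ X) : f⁻¹ = f.symm := rfl

/-- The uniform topology (topology of uniform convergence, equivalently for a compact
metric space the compact-open topology) on the group of homeomorphisms of a compact
metric space, as the metric topology of the sup-metric. -/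
instance instMetricSpaceHomeomorph {Y : Type*} [MetricSpace Y] [CompactSpace Y] :
    MetricSpace (Y ≃ₜ Y) :=
  MetricSpace.induced (fun h => (⟨h, h.continuous⟩ : C(Y, Y)))
    (fun f g hfg => Homeomorph.ext fun x => congrFun (congrArg ContinuousMap.toFun hfg) x)
    inferInstance

end Homeomorph

namespace Homeomorph

variable {Y : Type*} [MetricSpace Y] [CompactSpace Y]

theorem dist_eq_contMap (f g : Y ≃ₜ Y) :
    dist f g = dist (⟨f, f.continuous⟩ : C(Y, Y)) (⟨g, g.continuous⟩ : C(Y, Y)) := rfl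

theorem dist_apply_le (f g : Y ≃ₜ Y) (x : Y) : dist (f x) (g x) ≤ dist f g :=
  ContinuousMap.dist_apply_le_dist (f := (⟨f, f.continuous⟩ : C(Y, Y)))
    (g := (⟨g, g.continuous⟩ : C(Y, Y))) x

theorem dist_lt_iff' (f g : Y ≃ₜ Y) {C : ℝ} (hC : 0 < C) :
    dist f g < C ↔ ∀ x : Y, dist (f x) (g x) < C := by
  rw [dist_eq_contMap, ContinuousMap.dist_lt_iff hC]
  rfl

instance : IsTopologicalGroup (Y ≃ₜ Y) where
  continuous_mul := by
    rw [Metric.continuous_iff]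
    rintro ⟨f₀, g₀⟩ ε hε
    obtain ⟨δ₁, hδ₁, H₁⟩ := Metric.uniformContinuous_iff.mp
      (CompactSpace.uniformContinuous_of_continuous f₀.continuous) (ε / 2) (by positivity)
    refine ⟨min δ₁ (ε / 2), by positivity, ?_⟩
    rintro ⟨f, g⟩ hd
    have hdf : dist f f₀ < ε / 2 := by
      have h' : dist f f₀ ≤ dist ((f, g)) ((f₀, g₀)) := by
        rw [Prod.dist_eq]; exact le_max_left _ _
      exact (h'.trans_lt hd).trans_le (min_le_right _ _)
    have hdg : dist g g₀ < δ₁ := by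
      have h' : dist g g₀ ≤ dist ((f, g)) ((f₀, g₀)) := by
        rw [Prod.dist_eq]; exact le_max_right _ _
      exact (h'.trans_lt hd).trans_le (min_le_left _ _)
    rw [dist_lt_iff' _ _ hε]
    intro x
    have h1 : dist (f (g x)) (f₀ (g x)) < ε / 2 :=
      lt_of_le_of_lt (dist_apply_le f f₀ (g x)) hdf
    have h2 : dist (f₀ (g x)) (f₀ (g₀ x)) < ε / 2 :=
      H₁ (lt_of_le_of_lt (dist_apply_le g g₀ x) hdg)
    calc dist ((f * g) x) ((f₀ * g₀) x) ≤ dist (f (g x)) (f₀ (g x)) + dist (f₀ (g x)) (f₀ (g₀ x)) :=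
          dist_triangle _ _ _
      _ < ε / 2 + ε / 2 := by exact add_lt_add h1 h2
      _ = ε := by ring
  continuous_inv := by
    rw [Metric.continuous_iff]
    intro f₀ ε hε
    obtain ⟨δ, hδ, H⟩ := Metric.uniformContinuous_iff.mp
      (CompactSpace.uniformContinuous_of_continuous f₀.symm.continuous) ε hε
    refine ⟨δ, hδ, ?_⟩
    intro g hdg
    rw [dist_lt_iff' _ _ hε]
    intro y
    have key : dist (g (g.symm y)) (f₀ (g.symm y)) < δ :=
      lt_of_le_of_lt (dist_apply_le g f₀ (g.symm y)) hdg
    have h2 := H key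
    have h3 : dist (f₀.symm (g (g.symm y))) (f₀.symm (f₀ (g.symm y))) < ε := h2
    rw [Homeomorph.apply_symm_apply, Homeomorph.symm_apply_apply] at h3
    rw [dist_comm] at h3
    simpa using h3
end Homeomorph

/-! ### Steinitz (supernatural) numbers -/

/-- A Steinitz number: a formal product of primes with exponents in `ℕ∞`. -/
def SteinitzNum : Type := Nat.Primes → ℕ∞

namespace SteinitzNum

/-- The Steinitz number associated to a natural number. -/
def ofNat (n : ℕ) : SteinitzNum := fun p => (n.factorization (p : ℕ) : ℕ∞)

/-- Multiplication of Steinitz numbers adds the exponents at each prime. -/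
instance : Mul SteinitzNum := ⟨fun a b p => a p + b p⟩

/-- The least common multiple of a collection of positive integers, as a Steinitz number:
its exponent at `p` is the supremum of the `p`-adic valuations of the elements. -/
def lcmSet (S : Set ℕ) : SteinitzNum := fun p => ⨆ n ∈ S, (n.factorization (p : ℕ) : ℕ∞)

/-- Two Steinitz numbers are asymptotically equivalent if they agree after multiplication
by positive integers. -/
def AsympEquiv (a b : SteinitzNum) : Prop :=
  ∃ n₀ m₀ : ℕ, 0 < n₀ ∧ 0 < m₀ ∧ ofNat n₀ * a = ofNat m₀ * b

/-- The prime spectrum of a Steinitz number: primes with nonzero exponent. -/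
def primeSpectrum (a : SteinitzNum) : Set Nat.Primes := { p | a p ≠ 0 }

/-- The finite prime spectrum: primes with finite nonzero exponent. -/
def finitePrimeSpectrum (a : SteinitzNum) : Set Nat.Primes := { p | a p ≠ 0 ∧ a p ≠ ⊤ }

/-- The infinite prime spectrum: primes with infinite exponent. -/
def infinitePrimeSpectrum (a : SteinitzNum) : Set Nat.Primes := { p | a p = ⊤ }

end SteinitzNum

/-! ### Steinitz orders for topological groups -/

/-- The Steinitz order of a topological group: the LCM of the orders of the finite
quotients `G/N` over open normal subgroups `N ⊆ G`. -/
def steinitzOrder (G : Type*) [Group G] [TopologicalSpace G] : SteinitzNum :=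
  SteinitzNum.lcmSet
    { n | ∃ N : Subgroup G, N.Normal ∧ IsOpen (N : Set G) ∧ n = Nat.card (G ⧸ N) }

/-- The Steinitz order of a subgroup `D` of a topological group `G`: the LCM of the
cardinalities `|D/(N ∩ D)|` over open normal subgroups `N ⊆ G`. -/
def steinitzOrderOfSubgroup {G : Type*} [Group G] [TopologicalSpace G] (D : Subgroup G) :
    SteinitzNum :=
  SteinitzNum.lcmSet
    { n | ∃ N : Subgroup G, N.Normal ∧ IsOpen (N : Set G) ∧
        n = Nat.card (↥D ⧸ (N.subgroupOf D)) }

/-- The relative Steinitz order of a subgroup `D` of a topological group `G`: the LCM of the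
cardinalities `|G/(N · D)|` over open normal subgroups `N ⊆ G`. -/
def steinitzRelativeOrder {G : Type*} [Group G] [TopologicalSpace G] (D : Subgroup G) :
    SteinitzNum :=
  SteinitzNum.lcmSet
    { n | ∃ N : Subgroup G, N.Normal ∧ IsOpen (N : Set G) ∧ n = Nat.card (G ⧸ (N ⊔ D)) }

/-- A profinite (compact Hausdorff totally disconnected) topological group is topologically
Noetherian if every increasing chain of closed subgroups has a maximal element. -/
def TopologicallyNoetherian (G : Type*) [Group G] [TopologicalSpace G] : Prop :=
  ∀ c : ℕ → Subgroup G, (∀ i, IsClosed (c i : Set G)) → Monotone c → ∃ i₀, ∀ i, c i ≤ c i₀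

/-! ### Cantor actions -/

section CantorActions

variable {X : Type*} [MetricSpace X] {Γ : Type*} [Group Γ]

/-- An action is minimal if every orbit is dense. -/
def IsMinimalAction (Φ : Γ →* (X ≃ₜ X)) : Prop :=
  ∀ x : X, Dense (Set.range fun g : Γ => Φ g x)

/-- An action is equicontinuous if it satisfies the uniform `ε`-`δ` condition with respect
to the metric. -/
def IsEquicontinuousAction (Φ : Γ →* (X ≃ₜ X)) : Prop :=
  ∀ ε : ℝ, 0 < ε → ∃ δ : ℝ, 0 < δ ∧
    ∀ x y : X, dist x y < δ → ∀ g : Γ, dist (Φ g x) (Φ g y) < ε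

variable [CompactSpace X]

/-- `G(Φ)`: the closure of the image of `Γ` in `Homeo(X)`, in the uniform topology. -/
def profiniteClosure (Φ : Γ →* (X ≃ₜ X)) : Subgroup (X ≃ₜ X) :=
  Φ.range.topologicalClosure

/-- The discriminant group: the isotropy subgroup of `G(Φ)` at `x`. -/
def discriminant (Φ : Γ →* (X ≃ₜ X)) (x : X) : Subgroup (profiniteClosure Φ) where
  carrier := { h | (h : X ≃ₜ X) x = x }
  one_mem' := rfl
  mul_mem' := by
    intro a b ha hb
    simp only [Set.mem_setOf_eq] at *
    show ((a : X ≃ₜ X) * (b : X ≃ₜ X)) x = x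
    rw [Homeomorph.mul_apply', hb, ha]
  inv_mem' := by
    intro a ha
    simp only [Set.mem_setOf_eq] at *
    show ((a : X ≃ₜ X)⁻¹) x = x
    rw [Homeomorph.inv_eq_symm]
    conv_lhs => rw [← ha]
    exact Homeomorph.symm_apply_apply _ _

/-- The Steinitz order `Π[G(Φ)]` of a Cantor action. -/
def steinitzOrderAction (Φ : Γ →* (X ≃ₜ X)) : SteinitzNum :=
  steinitzOrder ↥(profiniteClosure Φ)

/-- The Steinitz order `Π[D(Φ,x)]` of the discriminant of a Cantor action. -/
def steinitzOrderDisc (Φ : Γ →* (X ≃ₜ X)) (x : X) : SteinitzNum :=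
  steinitzOrderOfSubgroup (discriminant Φ x)

/-- The relative Steinitz order `Π[G(Φ) : D(Φ,x)]` of a Cantor action. -/
def steinitzOrderRel (Φ : Γ →* (X ≃ₜ X)) (x : X) : SteinitzNum :=
  steinitzRelativeOrder (discriminant Φ x)

end CantorActions

/-! ### Adapted sets, holonomy and return equivalence -/

section Adapted

variable {X : Type*} [MetricSpace X] {Γ : Type*} [Group Γ]

/-- A nonempty clopen subset `U ⊆ X` is adapted to the action `Φ` if every group element
either fixes `U` or moves it entirely off of itself. -/
def IsAdaptedSet (Φ : Γ →* (X ≃ₜ X)) (U : Set X) : Prop :=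
  U.Nonempty ∧ IsClopen U ∧ ∀ g : Γ, ((Φ g) '' U ∩ U).Nonempty → (Φ g) '' U = U

/-- The stabilizer subgroup `Γ_U` of an adapted set. -/
def adaptedStabilizer (Φ : Γ →* (X ≃ₜ X)) (U : Set X) : Subgroup Γ where
  carrier := { g | (Φ g) '' U = U }
  one_mem' := by
    change (⇑(Φ 1)) '' U = U
    rw [map_one]
    exact Set.image_id U
  mul_mem' := by
    intro a b ha hb
    simp only [Set.mem_setOf_eq] at *
    rw [map_mul]
    show ((Φ a) * (Φ b)) '' U = U
    have : (((Φ a) * (Φ b) : X ≃ₜ X) : X → X) = (Φ a) ∘ (Φ b) := rfl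
    rw [this, Set.image_comp, hb, ha]
  inv_mem' := by
    intro a ha
    simp only [Set.mem_setOf_eq] at *
    rw [map_inv, Homeomorph.inv_eq_symm]
    conv_lhs => rw [← ha]
    rw [← Set.image_comp]
    simp

/-- The homeomorphism of an invariant set induced by a homeomorphism of `X`. -/
def restrictHomeo (h : X ≃ₜ X) {U : Set X} (hU : h '' U = U) : U ≃ₜ U :=
  (h.image U).trans (Homeomorph.setCongr hU)

@[simp] theorem restrictHomeo_coe (h : X ≃ₜ X) {U : Set X} (hU : h '' U = U) (x : U) :
    (restrictHomeo h hU x : X) = h x := rfl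

/-- The holonomy homomorphism of an adapted set: restriction of the stabilizer to `U`. -/
def holonomyHom (Φ : Γ →* (X ≃ₜ X)) (U : Set X) :
    adaptedStabilizer Φ U →* (↥U ≃ₜ ↥U) where
  toFun g := restrictHomeo (Φ (g : Γ)) g.2
  map_one' := by
    ext x
    show ((restrictHomeo (Φ ((1 : adaptedStabilizer Φ U) : Γ)) _ x : X) = _)
    simp
  map_mul' := by
    intro a b
    ext x
    show ((restrictHomeo (Φ ((a * b : adaptedStabilizer Φ U) : Γ)) _ x : X) = _)
    simp only [restrictHomeo_coe, Subgroup.coe_mul, map_mul]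
    rfl

/-- The holonomy group `H_U` of an adapted set: the image of the stabilizer in `Homeo(U)`. -/
def holonomyGroup (Φ : Γ →* (X ≃ₜ X)) (U : Set X) : Subgroup (↥U ≃ₜ ↥U) :=
  (holonomyHom Φ U).range

end Adapted

/-- Two Cantor actions are return equivalent if they admit adapted sets whose holonomy
actions are isomorphic, via a homeomorphism between the adapted sets together with a
compatible isomorphism of the holonomy groups. -/
def ReturnEquivalent
    {X₁ : Type*} [MetricSpace X₁] {Γ₁ : Type*} [Group Γ₁]
    {X₂ : Type*} [MetricSpace X₂] {Γ₂ : Type*} [Group Γ₂]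
    (Φ₁ : Γ₁ →* (X₁ ≃ₜ X₁)) (Φ₂ : Γ₂ →* (X₂ ≃ₜ X₂)) : Prop :=
  ∃ (U₁ : Set X₁) (U₂ : Set X₂), IsAdaptedSet Φ₁ U₁ ∧ IsAdaptedSet Φ₂ U₂ ∧
    ∃ (h : ↥U₁ ≃ₜ ↥U₂) (θ : holonomyGroup Φ₁ U₁ ≃* holonomyGroup Φ₂ U₂),
      ∀ k : holonomyGroup Φ₁ U₁,
        ((θ k : ↥U₂ ≃ₜ ↥U₂)) = h.symm.trans (((k : ↥U₁ ≃ₜ ↥U₁)).trans h)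

section Regularity

variable {X : Type*} [MetricSpace X]

/-- An action of a group `H` on `X` through a homomorphism `ρ : H →* Homeo(X)` is locally
quasi-analytic if there is `ε > 0` so that for every nonempty open `U` of diameter less
than `ε`, any element acting as the identity on a nonempty open subset `V ⊆ U` with
`ρ g (V) = V` acts as the identity on all of `U`. -/
def IsLocallyQuasiAnalytic {H : Type*} [Group H] (ρ : H →* (X ≃ₜ X)) : Prop :=
  ∃ ε : ℝ, 0 < ε ∧ ∀ U : Set X, IsOpen U → U.Nonempty → Metric.diam U < ε →
    ∀ V : Set X, V ⊆ U → IsOpen V → V.Nonempty →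
      ∀ g : H, (ρ g) '' V = V → (∀ x ∈ V, ρ g x = x) → ∀ x ∈ U, ρ g x = x

variable [CompactSpace X] {Γ : Type*} [Group Γ]

/-- A Cantor action is stable if the induced action of `G(Φ)` on `X` is locally
quasi-analytic; otherwise it is wild. -/
def IsStableAction (Φ : Γ →* (X ≃ₜ X)) : Prop :=
  IsLocallyQuasiAnalytic (profiniteClosure Φ).subtype

/-- An action is topologically free if the set of points fixed by some nontrivial group
element is meagre. -/
def IsTopologicallyFree (Φ : Γ →* (X ≃ₜ X)) : Prop :=
  IsMeagre { x : X | ∃ g : Γ, g ≠ 1 ∧ Φ g x = x }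

end Regularity

section AuxAdapted

variable {X : Type*} [MetricSpace X] {Γ : Type*} [Group Γ]

lemma isAdaptedSet_univ [Nonempty X] (Φ : Γ →* (X ≃ₜ X)) :
    IsAdaptedSet Φ (Set.univ : Set X) := by
  refine ⟨Set.univ_nonempty, isClopen_univ, fun g _ => ?_⟩
  exact Set.image_univ_of_surjective (Φ g).surjective

lemma isAdaptedSet_inter (Φ : Γ →* (X ≃ₜ X)) {U W : Set X}
    (hU : IsAdaptedSet Φ U) (hW : IsAdaptedSet Φ W) (hne : (U ∩ W).Nonempty) :
    IsAdaptedSet Φ (U ∩ W) := by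
  refine ⟨hne, hU.2.1.inter hW.2.1, fun g hg => ?_⟩
  rw [Set.image_inter (Φ g).injective] at hg ⊢
  obtain ⟨z, ⟨hz1, hz2⟩, hz3, hz4⟩ := hg
  rw [hU.2.2 g ⟨z, hz1, hz3⟩, hW.2.2 g ⟨z, hz2, hz4⟩]

lemma exists_adapted_in_ball [CompactSpace X] [T2Space X] [TotallyDisconnectedSpace X]
    (Φ : Γ →* (X ≃ₜ X)) (heqc : IsEquicontinuousAction Φ) (x : X) {r : ℝ} (hr : 0 < r) :
    ∃ A : Set X, IsAdaptedSet Φ A ∧ x ∈ A ∧ A ⊆ Metric.ball x r := by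
  obtain ⟨V, hVclopen, hxV, hVsub⟩ :=
    compact_exists_isClopen_in_isOpen (X := X) Metric.isOpen_ball (Metric.mem_ball_self hr)
  set A : Set X := {y : X | ∀ g : Γ, Φ g y ∈ V ↔ Φ g x ∈ V} with hA
  have hxA : x ∈ A := fun g => Iff.rfl
  have hAsub : A ⊆ V := by
    intro y hy
    have := (hy 1)
    simpa using this.mpr (by simpa using hxV)
  -- A is closed
  have hclosed : IsClosed A := by
    have : A = ⋂ g : Γ, {y : X | Φ g y ∈ V ↔ Φ g x ∈ V} := by
      ext y; simp [hA]
    rw [this]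
    refine isClosed_iInter fun g => ?_
    by_cases h : Φ g x ∈ V
    · have : {y : X | Φ g y ∈ V ↔ Φ g x ∈ V} = (Φ g) ⁻¹' V := by
        ext y; simp [h]
      rw [this]; exact hVclopen.1.preimage (Φ g).continuous
    · have : {y : X | Φ g y ∈ V ↔ Φ g x ∈ V} = (Φ g) ⁻¹' Vᶜ := by
        ext y; simp [h]
      rw [this]; exact hVclopen.2.isClosed_compl.preimage (Φ g).continuous
  -- A is open, via equicontinuity and a thickening of V inside V
  obtain ⟨ε, hε, hthick⟩ :=
    (hVclopen.1.isCompact).exists_thickening_subset_open hVclopen.2 (subset_refl V)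
  obtain ⟨δ, hδ, hδprop⟩ := heqc ε hε
  have hopen : IsOpen A := by
    rw [Metric.isOpen_iff]
    intro y hy
    refine ⟨δ, hδ, fun z hz => ?_⟩
    intro g
    have hd : dist (Φ g y) (Φ g z) < ε := hδprop y z (by rwa [dist_comm]) g
    rw [← hy g]
    constructor
    · intro hzV
      exact hthick (Metric.mem_thickening_iff.mpr ⟨Φ g z, hzV, hd⟩)
    · intro hyV
      exact hthick (Metric.mem_thickening_iff.mpr ⟨Φ g y, hyV, by rwa [dist_comm]⟩)
  -- adaptedness
  refine ⟨A, ⟨⟨x, hxA⟩, ⟨hclosed, hopen⟩, fun g hg => ?_⟩, hxA, fun y hy => hVsub (hAsub hy)⟩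
  obtain ⟨z, ⟨w, hwA, hwz⟩, hzA⟩ := hg
  -- key: ∀ h, Φ (h*g) x ∈ V ↔ Φ h x ∈ V
  have key : ∀ h : Γ, Φ (h * g) x ∈ V ↔ Φ h x ∈ V := by
    intro h
    have h1 : Φ (h * g) w ∈ V ↔ Φ (h * g) x ∈ V := hwA (h * g)
    have h2 : Φ h z ∈ V ↔ Φ h x ∈ V := hzA h
    rw [← hwz] at h2
    have h3 : Φ h (Φ g w) = Φ (h * g) w := by rw [map_mul]; rfl
    rw [h3] at h2
    exact h1.symm.trans h2
  have keyinv : ∀ h : Γ, Φ (h * g⁻¹) x ∈ V ↔ Φ h x ∈ V := by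
    intro h
    have := key (h * g⁻¹)
    rw [mul_assoc, inv_mul_cancel, mul_one] at this
    exact this.symm
  apply Set.eq_of_subset_of_subset
  · rintro _ ⟨u, huA, rfl⟩
    intro h
    have h3 : Φ h (Φ g u) = Φ (h * g) u := by rw [map_mul]; rfl
    rw [h3]
    exact (huA (h * g)).trans (key h)
  · intro v hvA
    refine ⟨Φ g⁻¹ v, ?_, ?_⟩
    · intro h
      have h3 : Φ h (Φ g⁻¹ v) = Φ (h * g⁻¹) v := by rw [map_mul]; rfl
      rw [h3]
      exact (hvA (h * g⁻¹)).trans (keyinv h)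
    · have : Φ g (Φ g⁻¹ v) = Φ (g * g⁻¹) v := by rw [map_mul]; rfl
      rw [this, mul_inv_cancel, map_one]; rfl

lemma adapted_step [CompactSpace X] [T2Space X] [TotallyDisconnectedSpace X]
    (hperf : Perfect (Set.univ : Set X))
    (Φ : Γ →* (X ≃ₜ X)) (heqc : IsEquicontinuousAction Φ) (x : X)
    {W : Set X} (hW : IsAdaptedSet Φ W) (hxW : x ∈ W) (n : ℕ) :
    ∃ W' : Set X, IsAdaptedSet Φ W' ∧ x ∈ W' ∧ W' ⊂ W ∧
      W' ⊆ Metric.ball x ((n : ℝ) + 1)⁻¹ := by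
  -- find a point y ≠ x in W
  have hacc : AccPt x (Filter.principal (Set.univ : Set X)) :=
    hperf.2 x (Set.mem_univ x)
  rw [accPt_iff_nhds] at hacc
  obtain ⟨y, ⟨hyW, -⟩, hyx⟩ := hacc W (hW.2.1.2.mem_nhds hxW)
  have hdy : 0 < dist x y := dist_pos.mpr (fun h => hyx (h.symm))
  set r : ℝ := min (dist x y) ((n : ℝ) + 1)⁻¹ with hrdef
  have hrpos : 0 < r := lt_min hdy (by positivity)
  obtain ⟨A, hA, hxA, hAball⟩ := exists_adapted_in_ball Φ heqc x hrpos
  refine ⟨W ∩ A, isAdaptedSet_inter Φ hW hA ⟨x, hxW, hxA⟩, ⟨hxW, hxA⟩, ?_, ?_⟩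
  · refine ⟨Set.inter_subset_left, fun hsub => ?_⟩
    have : y ∈ W ∩ A := hsub hyW
    have hy' : dist y x < r := Metric.mem_ball.mp (hAball this.2)
    rw [dist_comm] at hy'
    exact absurd hy' (not_lt.mpr (min_le_left _ _))
  · intro z hz
    have := Metric.mem_ball.mp (hAball hz.2)
    exact Metric.mem_ball.mpr (this.trans_le (min_le_right _ _))

end AuxAdapted

/-- Every point of a minimal equicontinuous Cantor action admits an
adapted neighborhood basis. -/
theorem exists_adapted_neighborhood_basis
    {X : Type*} [MetricSpace X] [CompactSpace X] [Nonempty X] [TotallyDisconnectedSpace X]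
    (hperf : Perfect (Set.univ : Set X))
    {Γ : Type*} [Group Γ] [Countable Γ] (Φ : Γ →* (X ≃ₜ X))
    (hmin : IsMinimalAction Φ) (heqc : IsEquicontinuousAction Φ) (x : X) :
    ∃ U : ℕ → Set X, U 0 = Set.univ ∧ (∀ ℓ, IsAdaptedSet Φ (U ℓ)) ∧
      (∀ ℓ, x ∈ U (ℓ + 1)) ∧ (∀ ℓ, U (ℓ + 1) ⊂ U ℓ) ∧ (⋂ ℓ, U ℓ) = {x} := by
  classical
  let step := fun (n : ℕ) (W : {S : Set X // IsAdaptedSet Φ S ∧ x ∈ S}) =>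
    adapted_step hperf Φ heqc x W.2.1 W.2.2 n
  let f : ℕ → {S : Set X // IsAdaptedSet Φ S ∧ x ∈ S} := fun n =>
    Nat.rec ⟨Set.univ, isAdaptedSet_univ Φ, Set.mem_univ x⟩
      (fun n p => ⟨(step n p).choose, (step n p).choose_spec.1,
        (step n p).choose_spec.2.1⟩) n
  have hsucc : ∀ n : ℕ, (f (n + 1)).1 ⊂ (f n).1 ∧
      (f (n + 1)).1 ⊆ Metric.ball x ((n : ℝ) + 1)⁻¹ := by
    intro n
    have hspec := (step n (f n)).choose_spec
    exact ⟨hspec.2.2.1, hspec.2.2.2⟩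
  refine ⟨fun n => (f n).1, rfl, fun ℓ => (f ℓ).2.1, fun ℓ => (f (ℓ + 1)).2.2,
    fun ℓ => (hsucc ℓ).1, ?_⟩
  apply Set.eq_of_subset_of_subset
  · intro z hz
    simp only [Set.mem_iInter] at hz
    have hz0 : dist z x = 0 := by
      by_contra h
      have hpos : 0 < dist z x := lt_of_le_of_ne dist_nonneg (Ne.symm h)
      obtain ⟨n, hn⟩ := exists_nat_one_div_lt hpos
      have := Metric.mem_ball.mp ((hsucc n).2 (hz (n + 1)))
      rw [one_div] at hn
      exact absurd this (not_lt.mpr hn.le)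
    simp [eq_of_dist_eq_zero hz0]
  · intro z hz
    simp only [Set.mem_singleton_iff] at hz
    subst hz
    simp only [Set.mem_iInter]
    intro n
    cases n with
    | zero => exact (f 0).2.2
    | succ m => exact (f (m + 1)).2.2
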